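/- arXiv:1601.01101 — 3 statements merged into one kernel-verified Lean document; each statement's English description precedes it below -/
import Mathlib

section
/- Let R be a commutative local artinian ring such that every uniform R-module is either simple or injective of composition length 2. Then the socle of R is simple, and R is a principal ideal ring whose composition length as a module over itself is at most 2. -/
universe u v

open CategoryTheory

section ModuleDefs

variable (R : Type u) [Ring R]

/-- `N` is an essential submodule of `D` (inside the ambient module `M`). -/
def IsEssentialIn {M : Type v} [AddCommGroup M] [Module R M] (N D : Submodule R M) : Prop :=
  N ≤ D ∧ ∀ K : Submodule R M, K ≤ D → K ≠ ⊥ → N ⊓ K ≠ ⊥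

/-- `N` is a direct summand of the ambient module. -/
def IsSummand {M : Type v} [AddCommGroup M] [Module R M] (N : Submodule R M) : Prop :=
  ∃ N' : Submodule R M, IsCompl N N'

/-- C1 (extending) module: every submodule is essential in a direct summand. -/
def IsC1Module (M : Type v) [AddCommGroup M] [Module R M] : Prop :=
  ∀ N : Submodule R M, ∃ D : Submodule R M, IsSummand R D ∧ IsEssentialIn R N D

/-- C2 module: every submodule isomorphic to a direct summand is a direct summand. -/
def IsC2Module (M : Type v) [AddCommGroup M] [Module R M] : Prop :=
  ∀ A B : Submodule R M, IsSummand R B → Nonempty (A ≃ₗ[R] B) → IsSummand R A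

/-- C3 module: the sum of two direct summands intersecting trivially is a direct summand. -/
def IsC3Module (M : Type v) [AddCommGroup M] [Module R M] : Prop :=
  ∀ A B : Submodule R M, IsSummand R A → IsSummand R B → A ⊓ B = ⊥ → IsSummand R (A ⊔ B)

/-- Quasi-continuous module: C1 and C3. -/
def IsQuasiContinuousModule (M : Type v) [AddCommGroup M] [Module R M] : Prop :=
  IsC1Module R M ∧ IsC3Module R M

/-- Continuous module: C1 and C2. -/
def IsContinuousModule (M : Type v) [AddCommGroup M] [Module R M] : Prop :=
  IsC1Module R M ∧ IsC2Module R M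

/-- Quasi-injective module: every homomorphism from a submodule into the module
extends to an endomorphism. -/
def IsQuasiInjectiveModule (M : Type v) [AddCommGroup M] [Module R M] : Prop :=
  ∀ (N : Submodule R M) (f : N →ₗ[R] M), ∃ g : M →ₗ[R] M, ∀ x : N, g x = f x

end ModuleDefs

section ApproxDefs

variable (R : Type u) [Ring R]

/-- `g : M ⟶ E` is a `C`-preenvelope of `M`. -/
def IsPreenvelope (C : ModuleCat.{u} R → Prop) {M E : ModuleCat.{u} R} (g : M ⟶ E) : Prop :=
  C E ∧ ∀ E' : ModuleCat.{u} R, C E' → ∀ g' : M ⟶ E', ∃ α : E ⟶ E', g ≫ α = g'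

/-- A preenveloping class. -/
def Preenveloping (C : ModuleCat.{u} R → Prop) : Prop :=
  ∀ M : ModuleCat.{u} R, ∃ (E : ModuleCat.{u} R) (g : M ⟶ E), IsPreenvelope R C g

/-- `g : M ⟶ E` is a `C`-envelope of `M`. -/
def IsEnvelope (C : ModuleCat.{u} R → Prop) {M E : ModuleCat.{u} R} (g : M ⟶ E) : Prop :=
  IsPreenvelope R C g ∧ ∀ α : E ⟶ E, g ≫ α = g → IsIso α

/-- An enveloping class. -/
def Enveloping (C : ModuleCat.{u} R → Prop) : Prop :=
  ∀ M : ModuleCat.{u} R, ∃ (E : ModuleCat.{u} R) (g : M ⟶ E), IsEnvelope R C g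

/-- `g : X ⟶ M` is a `C`-precover of `M`. -/
def IsPrecover (C : ModuleCat.{u} R → Prop) {X M : ModuleCat.{u} R} (g : X ⟶ M) : Prop :=
  C X ∧ ∀ X' : ModuleCat.{u} R, C X' → ∀ g' : X' ⟶ M, ∃ α : X' ⟶ X, α ≫ g = g'

/-- A precovering class. -/
def Precovering (C : ModuleCat.{u} R → Prop) : Prop :=
  ∀ M : ModuleCat.{u} R, ∃ (X : ModuleCat.{u} R) (g : X ⟶ M), IsPrecover R C g

/-- `C` is closed under finite direct sums. -/
def ClosedUnderFiniteDirectSums (C : ModuleCat.{u} R → Prop) : Prop :=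
  ∀ (n : ℕ) (M : Fin n → ModuleCat.{u} R), (∀ i, C (M i)) →
    C (ModuleCat.of R (∀ i, M i))

/-- `C` is closed under isomorphisms. -/
def ClosedUnderIso (C : ModuleCat.{u} R → Prop) : Prop :=
  ∀ M N : ModuleCat.{u} R, (M ≅ N) → C M → C N

/-- `C` is closed under direct summands. -/
def ClosedUnderSummands (C : ModuleCat.{u} R → Prop) : Prop :=
  ∀ (M : ModuleCat.{u} R) (N : Submodule R M), IsSummand R N → C M → C (ModuleCat.of R N)

end ApproxDefs
section ExtraDefs

variable (R : Type u) [Ring R]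

/-- A uniform module: nonzero, and every nonzero submodule is essential. -/
def IsUniformModule (M : Type v) [AddCommGroup M] [Module R M] : Prop :=
  Nontrivial M ∧ ∀ N : Submodule R M, N ≠ ⊥ → IsEssentialIn R N (⊤ : Submodule R M)

/-- A module of composition length exactly `2`. -/
def HasCompositionLength2 (M : Type v) [AddCommGroup M] [Module R M] : Prop :=
  ∃ N : Submodule R M, IsSimpleModule R N ∧ IsSimpleModule R (M ⧸ N)

/-- A module of composition length at most `2`. -/
def CompositionLengthLE2 (M : Type v) [AddCommGroup M] [Module R M] : Prop :=
  ∃ N : Submodule R M, (IsSimpleModule R N ∨ N = ⊥) ∧ (IsSimpleModule R (M ⧸ N) ∨ N = ⊤)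

end ExtraDefs

section Aux

open IsLocalRing Submodule LinearMap

/-- Over a commutative local ring, the kernel of `r ↦ r • x` is the maximal ideal whenever `x`
is a nonzero element of an atom (simple submodule). -/
lemma aux_ker_eq_maximalIdeal {R : Type u} [CommRing R] [IsLocalRing R]
    {M : Type u} [AddCommGroup M] [Module R M] {P : Submodule R M}
    (hP : IsAtom P) {x : M} (hxP : x ∈ P) (hx : x ≠ 0) :
    LinearMap.ker (LinearMap.toSpanSingleton R M x) = maximalIdeal R := by
  have hle : (Submodule.span R {x}) ≤ P := (Submodule.span_singleton_le_iff_mem x P).2 hxP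
  have hspan : Submodule.span R {x} = P := by
    rcases lt_or_eq_of_le hle with hlt | he
    · exact absurd (hP.2 _ hlt) (fun hb => hx ((Submodule.span_singleton_eq_bot).1 hb))
    · exact he
  haveI hPs : IsSimpleModule R ↥P := isSimpleModule_iff_isAtom.2 hP
  haveI : IsSimpleModule R
      (R ⧸ LinearMap.ker (LinearMap.toSpanSingleton R M x)) := by
    refine IsSimpleModule.congr (N := ↥P) ?_
    refine ((LinearMap.toSpanSingleton R M x).quotKerEquivRange).trans (LinearEquiv.ofEq _ _ ?_)
    rw [← LinearMap.span_singleton_eq_range, hspan]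
  have hco : IsCoatom (LinearMap.ker (LinearMap.toSpanSingleton R M x)) :=
    isSimpleModule_iff_isCoatom.1 ‹_›
  exact IsLocalRing.eq_maximalIdeal (Ideal.isMaximal_def.2 hco)

end Aux

theorem stmt_16 (R : Type u) [CommRing R] [IsLocalRing R] [IsArtinianRing R]
    (h : ∀ (U : Type u) [AddCommGroup U] [Module R U], IsUniformModule R U →
      IsSimpleModule R U ∨ (Module.Injective R U ∧ HasCompositionLength2 R U)) :
    IsSimpleModule R ↥(sSup {S : Submodule R R | IsSimpleModule R ↥S}) ∧
      IsPrincipalIdealRing R ∧ CompositionLengthLE2 R R := by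
  classical
  have hmco : IsCoatom (IsLocalRing.maximalIdeal R) :=
    Ideal.isMaximal_def.1 (IsLocalRing.maximalIdeal.isMaximal R)
  -- top is not bot
  have htb : (⊤ : Submodule R R) ≠ ⊥ := by
    intro hh
    have : (1 : R) ∈ (⊥ : Submodule R R) := hh ▸ Submodule.mem_top
    exact one_ne_zero ((Submodule.mem_bot R).1 this)
  by_cases hm : IsLocalRing.maximalIdeal R = ⊥
  · -- R is a field
    have hTatom : IsAtom (⊤ : Submodule R R) := by
      refine ⟨htb, fun b hb => ?_⟩
      have : b ≤ IsLocalRing.maximalIdeal R := IsLocalRing.le_maximalIdeal (ne_of_lt hb)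
      exact le_bot_iff.1 (hm ▸ this)
    have huniq : ∀ S : Submodule R R, IsAtom S → S = ⊤ := by
      intro S hS
      by_contra hne
      have : S ≤ IsLocalRing.maximalIdeal R := IsLocalRing.le_maximalIdeal hne
      exact hS.1 (le_bot_iff.1 (hm ▸ this))
    have hset : {S : Submodule R R | IsSimpleModule R ↥S} = {⊤} := by
      ext S
      simp only [Set.mem_setOf_eq, Set.mem_singleton_iff, isSimpleModule_iff_isAtom]
      exact ⟨huniq S, fun hh => hh ▸ hTatom⟩
    refine ⟨?_, ?_, ?_⟩
    · rw [hset, sSup_singleton]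
      exact isSimpleModule_iff_isAtom.2 hTatom
    · constructor
      intro J
      by_cases hJ : J = ⊤
      · exact hJ ▸ ⟨⟨1, (Ideal.span_singleton_one).symm⟩⟩
      · have : J ≤ IsLocalRing.maximalIdeal R := IsLocalRing.le_maximalIdeal hJ
        have : J = ⊥ := le_bot_iff.1 (hm ▸ this)
        exact this ▸ ⟨⟨0, (Submodule.span_zero_singleton R).symm⟩⟩
    · exact ⟨⊥, Or.inr rfl, Or.inl (isSimpleModule_iff_isCoatom.2 (hm ▸ hmco))⟩
  · -- maximal ideal is nonzero: show it is an atom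
    obtain ⟨c, hcm, hc0⟩ := (Submodule.ne_bot_iff _).1 hm
    -- Zorn: an ideal maximal among those not containing c
    obtain ⟨I, -, hIs⟩ := zorn_le_nonempty₀ {I : Ideal R | c ∉ I}
      (fun ch hchs hch y hy => by
        refine ⟨sSup ch, ?_, fun z hz => le_sSup hz⟩
        intro hcs
        obtain ⟨J, hJch, hcJ⟩ :=
          (Submodule.mem_sSup_of_directed ⟨y, hy⟩ hch.directedOn).1 hcs
        exact hchs hJch hcJ)
      ⊥ (by simpa using hc0)
    have hI : c ∉ I := hIs.1
    have hgt : ∀ J : Ideal R, I < J → c ∈ J := by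
      intro J hJ
      by_contra hcJ
      exact hJ.ne (le_antisymm hJ.le (hIs.2 hcJ hJ.le))
    -- every nonzero submodule of R ⧸ I contains the class of c
    have hmem : ∀ P : Submodule R (R ⧸ I), P ≠ ⊥ →
        (Submodule.Quotient.mk c : R ⧸ I) ∈ P := by
      intro P hP
      have h1 : I ≤ Submodule.comap I.mkQ P := by
        intro x hx
        have : I.mkQ x = 0 := (Submodule.Quotient.mk_eq_zero I).2 hx
        simpa [Submodule.mem_comap, this] using P.zero_mem
      have hne : I ≠ Submodule.comap I.mkQ P := by
        intro he
        apply hP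
        have hsur := Submodule.map_comap_eq_of_surjective
          (I.mkQ_surjective) P
        rw [← hsur, ← he]
        rw [eq_bot_iff]
        rintro x hx
        obtain ⟨y, hy, rfl⟩ := Submodule.mem_map.1 hx
        simpa [Submodule.mem_bot] using (Submodule.Quotient.mk_eq_zero I).2 hy
      have := hgt _ (lt_of_le_of_ne h1 hne)
      exact this
    have hInetop : I ≠ ⊤ := fun he => hI (he ▸ Submodule.mem_top)
    -- R ⧸ I is uniform
    have huni : IsUniformModule R (R ⧸ I) := by
      refine ⟨Submodule.Quotient.nontrivial_iff.2 (lt_top_iff_ne_top.2 hInetop).ne, ?_⟩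
      intro N hN
      refine ⟨le_top, fun K _ hK hbot => ?_⟩
      have : (Submodule.Quotient.mk c : R ⧸ I) ∈ N ⊓ K :=
        Submodule.mem_inf.2 ⟨hmem N hN, hmem K hK⟩
      rw [hbot, Submodule.mem_bot] at this
      exact hI ((Submodule.Quotient.mk_eq_zero I).1 this)
    -- apply the hypothesis
    have hmatom : IsAtom (IsLocalRing.maximalIdeal R) := by
      rcases h (R ⧸ I) huni with hsimp | ⟨hinj, N, hNsimp, hQsimp⟩
      · -- R ⧸ I simple would force I = maximal ideal, contradicting c ∈ m \ I
        have hco : IsCoatom I := isSimpleModule_iff_isCoatom.1 hsimp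
        have : I = IsLocalRing.maximalIdeal R :=
          IsLocalRing.eq_maximalIdeal (Ideal.isMaximal_def.2 hco)
        exact absurd (this ▸ hcm) hI
      · -- injective case: show I = ⊥
        have hIbot : I = ⊥ := by
          by_contra hIne
          obtain ⟨J, ⟨hJI, hJne⟩, hJmin⟩ := IsArtinian.set_has_minimal
            {J : Submodule R R | J ≤ I ∧ J ≠ ⊥} ⟨I, le_rfl, hIne⟩
          have hJatom : IsAtom J := by
            refine ⟨hJne, fun b hb => ?_⟩
            by_contra hbne
            exact hJmin b ⟨hb.le.trans hJI, hbne⟩ hb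
          obtain ⟨d, hdJ, hd0⟩ := (Submodule.ne_bot_iff J).1 hJne
          have hkerd : LinearMap.ker (LinearMap.toSpanSingleton R R d) =
              IsLocalRing.maximalIdeal R := aux_ker_eq_maximalIdeal hJatom hdJ hd0
          have hNatom : IsAtom N := isSimpleModule_iff_isAtom.1 hNsimp
          obtain ⟨n, hnN, hn0⟩ := (Submodule.ne_bot_iff N).1 hNatom.1
          have hkern : LinearMap.ker (LinearMap.toSpanSingleton R (R ⧸ I) n) =
              IsLocalRing.maximalIdeal R := aux_ker_eq_maximalIdeal hNatom hnN hn0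
          set f₁ : (R ⧸ IsLocalRing.maximalIdeal R) →ₗ[R] R :=
            (IsLocalRing.maximalIdeal R).liftQ (LinearMap.toSpanSingleton R R d) hkerd.ge
          have hf₁inj : Function.Injective f₁ := by
            rw [← LinearMap.ker_eq_bot]
            exact Submodule.ker_liftQ_eq_bot' _ _ hkerd.symm
          set g₁ : (R ⧸ IsLocalRing.maximalIdeal R) →ₗ[R] (R ⧸ I) :=
            (IsLocalRing.maximalIdeal R).liftQ
              (LinearMap.toSpanSingleton R (R ⧸ I) n) hkern.ge
          obtain ⟨g, hg⟩ := hinj.out f₁ hf₁inj g₁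
          have h1 := hg (Submodule.Quotient.mk 1)
          have hf1 : f₁ (Submodule.Quotient.mk 1) = d := one_smul R d
          have hg1 : g₁ (Submodule.Quotient.mk 1) = n := one_smul R n
          rw [hf1, hg1] at h1
          -- but g d = d • g 1 = 0 since d ∈ I annihilates R ⧸ I
          have hgd : g d = d • g 1 := by
            rw [← map_smul, smul_eq_mul, mul_one]
          have hzero : d • g 1 = 0 := by
            obtain ⟨r, hr⟩ := Submodule.Quotient.mk_surjective I (g 1)
            rw [← hr, ← Submodule.Quotient.mk_smul]
            exact (Submodule.Quotient.mk_eq_zero I).2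
              (by simpa [smul_eq_mul] using I.mul_mem_right r (hJI hdJ))
          exact hn0 (by rw [← h1, hgd, hzero])
        -- now I = ⊥ and R ≅ R ⧸ I has length 2
        subst hIbot
        have e : (R ⧸ (⊥ : Ideal R)) ≃ₗ[R] R := Submodule.quotEquivOfEqBot ⊥ rfl
        have hatom : IsAtom (Submodule.map (e : (R ⧸ (⊥ : Ideal R)) →ₗ[R] R) N) := by
          have := (Submodule.orderIsoMapComap e).isAtom_iff N
          simpa [Submodule.orderIsoMapComap] using
            this.2 (isSimpleModule_iff_isAtom.1 hNsimp)
        have hcoatom : IsCoatom (Submodule.map (e : (R ⧸ (⊥ : Ideal R)) →ₗ[R] R) N) := by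
          have := (Submodule.orderIsoMapComap e).isCoatom_iff N
          simpa [Submodule.orderIsoMapComap] using
            this.2 (isSimpleModule_iff_isCoatom.1 hQsimp)
        have heq : Submodule.map (e : (R ⧸ (⊥ : Ideal R)) →ₗ[R] R) N =
            IsLocalRing.maximalIdeal R :=
          IsLocalRing.eq_maximalIdeal (Ideal.isMaximal_def.2 hcoatom)
        exact heq ▸ hatom
    -- finish from hmatom
    have huniq : ∀ S : Submodule R R, IsAtom S → S = IsLocalRing.maximalIdeal R := by
      intro S hS
      have hSnetop : S ≠ ⊤ := by
        intro he
        have hmlt : IsLocalRing.maximalIdeal R < ⊤ :=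
          lt_top_iff_ne_top.2 hmco.1
        exact hm (hS.2 _ (he ▸ hmlt))
      have hle : S ≤ IsLocalRing.maximalIdeal R := IsLocalRing.le_maximalIdeal hSnetop
      rcases lt_or_eq_of_le hle with hlt | he
      · exact absurd (hmatom.2 _ hlt) hS.1
      · exact he
    have hset : {S : Submodule R R | IsSimpleModule R ↥S} =
        {IsLocalRing.maximalIdeal R} := by
      ext S
      simp only [Set.mem_setOf_eq, Set.mem_singleton_iff, isSimpleModule_iff_isAtom]
      exact ⟨huniq S, fun hh => hh ▸ hmatom⟩
    -- maximal ideal is principal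
    obtain ⟨x, hxm, hx0⟩ := (Submodule.ne_bot_iff _).1 hm
    have hspan : Submodule.span R {x} = IsLocalRing.maximalIdeal R := by
      have hle : Submodule.span R {x} ≤ IsLocalRing.maximalIdeal R :=
        (Submodule.span_singleton_le_iff_mem x _).2 hxm
      rcases lt_or_eq_of_le hle with hlt | he
      · exact absurd (hmatom.2 _ hlt)
          (fun hb => hx0 ((Submodule.span_singleton_eq_bot).1 hb))
      · exact he
    refine ⟨?_, ?_, ?_⟩
    · rw [hset, sSup_singleton]
      exact isSimpleModule_iff_isAtom.2 hmatom
    · constructor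
      intro J
      by_cases hJtop : J = ⊤
      · exact hJtop ▸ ⟨⟨1, (Ideal.span_singleton_one).symm⟩⟩
      · by_cases hJbot : J = ⊥
        · exact hJbot ▸ ⟨⟨0, (Submodule.span_zero_singleton R).symm⟩⟩
        · have hle : J ≤ IsLocalRing.maximalIdeal R := IsLocalRing.le_maximalIdeal hJtop
          have : J = IsLocalRing.maximalIdeal R := by
            rcases lt_or_eq_of_le hle with hlt | he
            · exact absurd (hmatom.2 _ hlt) hJbot
            · exact he
          exact this ▸ ⟨⟨x, hspan.symm⟩⟩
    · exact ⟨IsLocalRing.maximalIdeal R, Or.inl (isSimpleModule_iff_isAtom.2 hmatom),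
        Or.inl (isSimpleModule_iff_isCoatom.2 hmco)⟩
end

section
/- Let R be a ring and M a right R-module. If the module M ⊕ M is a C3-module, then M is a C2-module. -/
universe u v

open CategoryTheory

theorem stmt_18 (R : Type u) [Ring R] (M : Type v) [AddCommGroup M] [Module R M]
    (h : IsC3Module R (M × M)) : IsC2Module R M := by
  rintro A B ⟨B', hB'⟩ ⟨e⟩
  set φ : A →ₗ[R] M := B.subtype.comp e.toLinearMap with hφdef
  have hφinj : Function.Injective φ := by
    simp only [hφdef, LinearMap.coe_comp]
    exact B.injective_subtype.comp e.injective
  have hφmem : ∀ a : A, φ a ∈ B := fun a => (e a).2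
  set g : A →ₗ[R] M × M := A.subtype.prod φ with hgdef
  set Γ : Submodule R (M × M) := LinearMap.range g with hΓdef
  have hmemΓ : ∀ x : M × M, x ∈ Γ ↔ ∃ a : A, ((a : M), φ a) = x := by
    intro x; rw [hΓdef, LinearMap.mem_range]; rfl
  -- Γ is a summand of M × M, with complement ⊤ × B'
  have hΓcompl : IsCompl Γ (Submodule.prod ⊤ B') := by
    constructor
    · rw [disjoint_iff]
      ext x
      simp only [Submodule.mem_inf, Submodule.mem_bot, Submodule.mem_prod]
      constructor
      · rintro ⟨hx, -, hx2⟩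
        obtain ⟨a, rfl⟩ := (hmemΓ x).1 hx
        have h0 : φ a = 0 := by
          simpa using hB'.disjoint.le_bot (Submodule.mem_inf.2 ⟨hφmem a, hx2⟩)
        have : a = 0 := hφinj (by simpa using h0)
        simp [this]
      · rintro rfl
        exact ⟨Γ.zero_mem, trivial, B'.zero_mem⟩
    · rw [codisjoint_iff, eq_top_iff]
      rintro ⟨m, n⟩ -
      have hn : n ∈ B ⊔ B' := by rw [hB'.sup_eq_top]; trivial
      obtain ⟨b, hb, b', hb', rfl⟩ := Submodule.mem_sup.1 hn
      obtain ⟨a, ha⟩ : ∃ a : A, φ a = b := ⟨e.symm ⟨b, hb⟩, by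
        simp [hφdef]⟩
      refine Submodule.mem_sup.2 ⟨((a : M), φ a), (hmemΓ _).2 ⟨a, rfl⟩,
        (m - a, b'), ⟨trivial, hb'⟩, ?_⟩
      simp only [Prod.mk_add_mk, Prod.mk.injEq, ha]
      exact ⟨by abel, trivial⟩
  -- ⊥ × ⊤ is a summand
  have h0compl : IsCompl (Submodule.prod (⊥ : Submodule R M) (⊤ : Submodule R M))
      (Submodule.prod (⊤ : Submodule R M) (⊥ : Submodule R M)) := by
    constructor
    · rw [disjoint_iff]
      ext x
      simp [Submodule.mem_prod, Prod.ext_iff]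
    · rw [codisjoint_iff, eq_top_iff]
      rintro ⟨m, n⟩ -
      exact Submodule.mem_sup.2 ⟨(0, n), ⟨rfl, trivial⟩, (m, 0), ⟨trivial, rfl⟩, by simp⟩
  -- their intersection is trivial
  have hdisj : Γ ⊓ Submodule.prod (⊥ : Submodule R M) (⊤ : Submodule R M) = ⊥ := by
    ext x
    simp only [Submodule.mem_inf, Submodule.mem_bot, Submodule.mem_prod]
    constructor
    · rintro ⟨hx, hx1, -⟩
      obtain ⟨a, rfl⟩ := (hmemΓ x).1 hx
      have : a = 0 := Subtype.ext (by simpa using hx1)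
      simp [this]
    · rintro rfl
      exact ⟨Γ.zero_mem, rfl, trivial⟩
  have hsum := h Γ (Submodule.prod (⊥ : Submodule R M) (⊤ : Submodule R M)) ⟨_, hΓcompl⟩ ⟨_, h0compl⟩ hdisj
  -- the sum is A × ⊤
  have heq : Γ ⊔ Submodule.prod (⊥ : Submodule R M) (⊤ : Submodule R M) = Submodule.prod A (⊤ : Submodule R M) := by
    apply le_antisymm
    · apply sup_le
      · rintro x hx
        obtain ⟨a, rfl⟩ := (hmemΓ x).1 hx
        exact ⟨a.2, trivial⟩
      · rintro ⟨m, n⟩ ⟨hm, -⟩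
        have : m = 0 := by simpa using hm
        exact ⟨by simp [this], trivial⟩
    · rintro ⟨m, n⟩ ⟨hm, -⟩
      refine Submodule.mem_sup.2 ⟨((⟨m, hm⟩ : A), φ ⟨m, hm⟩), (hmemΓ _).2 ⟨⟨m, hm⟩, rfl⟩,
        (0, n - φ ⟨m, hm⟩), ⟨rfl, trivial⟩, by simp⟩
  rw [heq] at hsum
  obtain ⟨C, hC⟩ := hsum
  set π := (Submodule.prod A (⊤ : Submodule R M)).projectionOnto C hC with hπdef
  set f : M →ₗ[R] M := (LinearMap.fst R M M).comp
    (((Submodule.prod A (⊤ : Submodule R M)).subtype).comp (π.comp (LinearMap.inl R M M))) with hfdef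
  have hrange : ∀ m : M, f m ∈ A := fun m => (π (m, 0)).2.1
  have hproj : ∀ x : A, (f.codRestrict A hrange) x = x := by
    intro x
    apply Subtype.ext
    show f (x : M) = (x : M)
    have hx : ((x : M), (0 : M)) ∈ Submodule.prod A (⊤ : Submodule R M) := ⟨x.2, trivial⟩
    have : π ((x : M), 0) = ⟨((x : M), 0), hx⟩ := by
      have := Submodule.linearProjOfIsCompl_apply_left hC ⟨((x : M), 0), hx⟩
      simpa [hπdef] using this
    simp [hfdef, this]
  exact ⟨LinearMap.ker (f.codRestrict A hrange), LinearMap.isCompl_of_proj hproj⟩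
end

section
/- Let R be a commutative integral domain that is not a field. Then R, as a module over itself, is a C3-module but not a C2-module. -/
universe u v

open CategoryTheory

theorem stmt_19 (R : Type u) [CommRing R] [IsDomain R] (h : ¬ IsField R) :
    IsC3Module R R ∧ ¬ IsC2Module R R := by
  -- summands of R are ⊥ or ⊤
  have key : ∀ A : Submodule R R, IsSummand R A → A = ⊥ ∨ A = ⊤ := by
    rintro A ⟨B, hAB⟩
    obtain ⟨e, he, f, hf, hef⟩ : ∃ e ∈ A, ∃ f ∈ B, e + f = 1 := by
      have : (1 : R) ∈ A ⊔ B := by rw [hAB.sup_eq_top]; trivial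
      exact Submodule.mem_sup.mp this
    have hef0 : e * f = 0 := by
      have h1 : e * f ∈ A := by
        have := A.smul_mem f he
        simpa [smul_eq_mul, mul_comm] using this
      have h2 : e * f ∈ B := by
        have := B.smul_mem e hf
        simpa [smul_eq_mul] using this
      have : e * f ∈ A ⊓ B := ⟨h1, h2⟩
      rwa [hAB.inf_eq_bot, Submodule.mem_bot] at this
    rcases mul_eq_zero.mp hef0 with h0 | h0
    · left
      rw [eq_bot_iff]
      intro x hx
      have hxB : x ∈ B := by
        have : x = x * f := by
          have : e + f = 1 := hef
          calc x = x * 1 := (mul_one x).symm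
          _ = x * (e + f) := by rw [hef]
          _ = x * f := by rw [h0]; ring
        rw [this]
        have := B.smul_mem x hf
        simpa [smul_eq_mul, mul_comm] using this
      have : x ∈ A ⊓ B := ⟨hx, hxB⟩
      rwa [hAB.inf_eq_bot] at this
    · right
      rw [eq_top_iff]
      intro x _
      have h1A : (1 : R) ∈ A := by rw [← hef, h0, add_zero]; exact he
      have := A.smul_mem x h1A
      simpa [smul_eq_mul] using this
  constructor
  · -- C3
    intro A B hA hB hint
    rcases key A hA with rfl | rfl
    · simpa using hB
    · rcases key B hB with rfl | rfl
      · simpa using ⟨⊥, isCompl_top_bot⟩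
      · simp at hint
  · -- not C2
    intro hC2
    obtain ⟨a, ha0, hau⟩ : ∃ a : R, a ≠ 0 ∧ ¬ IsUnit a := by
      by_contra hcon
      push_neg at hcon
      exact h ⟨exists_pair_ne R, mul_comm, fun {a} ha =>
        (hcon a ha).exists_right_inv⟩
    set A : Submodule R R := Submodule.span R {a} with hAdef
    have hiso : Nonempty (A ≃ₗ[R] (⊤ : Submodule R R)) := by
      have hinj : Function.Injective (LinearMap.toSpanSingleton R R a) := by
        intro x y hxy
        simp only [LinearMap.toSpanSingleton_apply, smul_eq_mul] at hxy
        exact mul_left_cancel₀ ha0 (by rw [mul_comm a x, mul_comm a y]; exact hxy)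
      have hrange : LinearMap.range (LinearMap.toSpanSingleton R R a) = A := by
        rw [hAdef, LinearMap.span_singleton_eq_range]
      exact ⟨(LinearEquiv.ofEq _ _ hrange.symm).trans
        ((LinearEquiv.ofInjective _ hinj).symm.trans Submodule.topEquiv.symm)⟩
    have hAsum : IsSummand R A := hC2 A ⊤ ⟨⊥, isCompl_top_bot⟩ hiso
    rcases key A hAsum with hbot | htop
    · exact ha0 (by
        have : a ∈ A := Submodule.mem_span_singleton_self a
        rw [hbot] at this
        simpa using this)
    · apply hau
      have : (1 : R) ∈ A := htop ▸ Submodule.mem_top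
      obtain ⟨c, hc⟩ := Submodule.mem_span_singleton.mp this
      exact IsUnit.of_mul_eq_one (a := a) c (by rw [mul_comm]; simpa [smul_eq_mul] using hc)
end
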